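/- arXiv:1807.01046 — 2 statements merged into one kernel-verified Lean document; each statement's English description precedes it below -/
import Mathlib

section
/- Let k, l ≥ 1, let f be a formal diffeomorphism of (ℂ,0) tangent to the identity at order k and g one tangent to the identity at order l. Then the commutator f ∘ g ∘ f^{-1} ∘ g^{-1} is tangent to the identity at order k + l. -/
open PowerSeries

/-- Composition `f ∘ g` of formal power series (valid when `g` has zero constant term). -/
noncomputable def pcomp (f g : PowerSeries ℂ) : PowerSeries ℂ :=
  PowerSeries.mk fun m => ∑ n ∈ Finset.range (m + 1), coeff n f * coeff m (g ^ n)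

/-- `f` is tangent to the identity at order `k`, i.e. `f(t) ≡ t mod t^(k+1)`. -/
def TangentId (k : ℕ) (f : PowerSeries ℂ) : Prop :=
  constantCoeff f = 0 ∧ coeff 1 f = 1 ∧ ∀ n, 2 ≤ n → n ≤ k → coeff n f = 0

namespace PcompAux

lemma coeff_pcomp (f g : PowerSeries ℂ) (m : ℕ) :
    coeff m (pcomp f g) = ∑ n ∈ Finset.range (m + 1), coeff n f * coeff m (g ^ n) := by
  simp [pcomp]

lemma coeff_pow_eq_zero {v : PowerSeries ℂ} (hv : constantCoeff v = 0) {m n : ℕ}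
    (h : m < n) : coeff m (v ^ n) = 0 := by
  have hd : (X : PowerSeries ℂ) ^ n ∣ v ^ n :=
    pow_dvd_pow_of_dvd (PowerSeries.X_dvd_iff.mpr hv) n
  exact (PowerSeries.X_pow_dvd_iff.mp hd) m h

lemma coeff_pcomp_ext {v : PowerSeries ℂ} (hv : constantCoeff v = 0) (u : PowerSeries ℂ)
    {m N : ℕ} (h : m < N) :
    coeff m (pcomp u v) = ∑ n ∈ Finset.range N, coeff n u * coeff m (v ^ n) := by
  rw [coeff_pcomp]
  apply Finset.sum_subset
  · exact Finset.range_subset_range.mpr h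
  · intro n _ hn2
    have hmn : m < n := by simpa using hn2
    rw [coeff_pow_eq_zero hv hmn, mul_zero]

lemma coeff_aeval {v : PowerSeries ℂ} (hv : constantCoeff v = 0) (P : Polynomial ℂ) (m : ℕ) :
    coeff m (Polynomial.aeval v P) =
      ∑ n ∈ Finset.range (m + 1), P.coeff n * coeff m (v ^ n) := by
  induction P using Polynomial.induction_on' with
  | add p q hp hq =>
      simp [map_add, hp, hq, add_mul, Finset.sum_add_distrib]
  | monomial n a =>
      rw [Polynomial.aeval_monomial, ← Algebra.smul_def, map_smul, smul_eq_mul]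
      simp only [Polynomial.coeff_monomial, ite_mul, zero_mul]
      rw [Finset.sum_ite_eq (Finset.range (m + 1)) n fun j => a * coeff m (v ^ j)]
      by_cases hn : n ∈ Finset.range (m + 1)
      · simp [hn]
      · have hmn : m < n := by simpa using hn
        simp [hn, coeff_pow_eq_zero hv hmn]

lemma coeff_pcomp_eq_aeval_trunc {v : PowerSeries ℂ} (hv : constantCoeff v = 0)
    (u : PowerSeries ℂ) {m N : ℕ} (h : m < N) :
    coeff m (pcomp u v) = coeff m (Polynomial.aeval v (trunc N u)) := by
  rw [coeff_aeval hv, coeff_pcomp]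
  apply Finset.sum_congr rfl
  intro n hn
  have hnN : n < N := lt_of_le_of_lt (Nat.lt_succ_iff.mp (Finset.mem_range.mp hn)) h
  rw [PowerSeries.coeff_trunc, if_pos hnN]

lemma pcomp_mul {v : PowerSeries ℂ} (hv : constantCoeff v = 0) (u w : PowerSeries ℂ) :
    pcomp (u * w) v = pcomp u v * pcomp w v := by
  ext m
  set N := m + 1 with hN
  have h1 : coeff m (Polynomial.aeval v (trunc N (u * w))) =
      coeff m (Polynomial.aeval v (trunc N u * trunc N w)) := by
    rw [coeff_aeval hv, coeff_aeval hv]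
    apply Finset.sum_congr rfl
    intro n hn
    have hnN : n < N := Finset.mem_range.mp hn
    congr 1
    rw [PowerSeries.coeff_trunc, if_pos hnN, Polynomial.coeff_mul, PowerSeries.coeff_mul]
    apply Finset.sum_congr rfl
    intro p hp
    have hp1 : p.1 ≤ n := Finset.HasAntidiagonal.antidiagonal.fst_le hp
    have hp2 : p.2 ≤ n := Finset.HasAntidiagonal.antidiagonal.snd_le hp
    rw [PowerSeries.coeff_trunc, if_pos (lt_of_le_of_lt hp1 hnN),
      PowerSeries.coeff_trunc, if_pos (lt_of_le_of_lt hp2 hnN)]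
  rw [coeff_pcomp_eq_aeval_trunc hv (u * w) (Nat.lt_succ_self m), h1, map_mul,
    PowerSeries.coeff_mul, PowerSeries.coeff_mul]
  apply Finset.sum_congr rfl
  intro p hp
  have hp1 : p.1 < N := lt_of_le_of_lt (Finset.HasAntidiagonal.antidiagonal.fst_le hp) (Nat.lt_succ_self m)
  have hp2 : p.2 < N := lt_of_le_of_lt (Finset.HasAntidiagonal.antidiagonal.snd_le hp) (Nat.lt_succ_self m)
  rw [← coeff_pcomp_eq_aeval_trunc hv u hp1, ← coeff_pcomp_eq_aeval_trunc hv w hp2]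

lemma pcomp_one (v : PowerSeries ℂ) : pcomp 1 v = 1 := by
  ext m
  rw [coeff_pcomp]
  simp only [PowerSeries.coeff_one, ite_mul, zero_mul, one_mul]
  rw [Finset.sum_ite_eq' (Finset.range (m + 1)) 0 fun j => coeff m (v ^ j)]
  simp [PowerSeries.coeff_one]

lemma pcomp_pow {v : PowerSeries ℂ} (hv : constantCoeff v = 0) (u : PowerSeries ℂ) (n : ℕ) :
    pcomp (u ^ n) v = (pcomp u v) ^ n := by
  induction n with
  | zero => simpa using pcomp_one v
  | succ n ih => rw [pow_succ, pow_succ, pcomp_mul hv, ih]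

lemma pcomp_assoc {g h : PowerSeries ℂ} (hg : constantCoeff g = 0)
    (hh : constantCoeff h = 0) (f : PowerSeries ℂ) :
    pcomp (pcomp f g) h = pcomp f (pcomp g h) := by
  ext m
  rw [coeff_pcomp, coeff_pcomp]
  have hstep : ∀ j ∈ Finset.range (m + 1),
      coeff j (pcomp f g) * coeff m (h ^ j)
        = ∑ n ∈ Finset.range (m + 1), coeff n f * (coeff j (g ^ n) * coeff m (h ^ j)) := by
    intro j hj
    rw [coeff_pcomp_ext hg f (Finset.mem_range.mp hj), Finset.sum_mul]
    simp [mul_assoc]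
  rw [Finset.sum_congr rfl hstep, Finset.sum_comm]
  apply Finset.sum_congr rfl
  intro n _
  rw [← Finset.mul_sum, ← coeff_pcomp, pcomp_pow hh]

lemma constantCoeff_pcomp {u : PowerSeries ℂ} (v : PowerSeries ℂ)
    (hu : constantCoeff u = 0) : constantCoeff (pcomp u v) = 0 := by
  rw [← coeff_zero_eq_constantCoeff_apply, coeff_pcomp]
  simp [coeff_zero_eq_constantCoeff_apply, hu]

lemma pcomp_X_left {v : PowerSeries ℂ} (hv : constantCoeff v = 0) : pcomp X v = v := by
  ext m
  rw [coeff_pcomp]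
  simp only [PowerSeries.coeff_X, ite_mul, zero_mul, one_mul]
  rw [Finset.sum_ite_eq' (Finset.range (m + 1)) 1 fun j => coeff m (v ^ j)]
  by_cases hm : m = 0
  · subst hm
    simp [coeff_zero_eq_constantCoeff_apply, hv]
  · have : 1 ∈ Finset.range (m + 1) := Finset.mem_range.mpr (by omega)
    simp [this]

lemma pow_sub_pow_dvd {v : PowerSeries ℂ} {l : ℕ} (h1 : (X : PowerSeries ℂ) ∣ v)
    (h2 : (X : PowerSeries ℂ) ^ (l + 1) ∣ v - X) (n : ℕ) :
    (X : PowerSeries ℂ) ^ (n + l) ∣ v ^ n - X ^ n := by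
  induction n with
  | zero => simp
  | succ n ih =>
      have e : v ^ (n + 1) - X ^ (n + 1) = v * (v ^ n - X ^ n) + (v - X) * X ^ n := by ring
      rw [e]
      apply dvd_add
      · have e2 : (X : PowerSeries ℂ) ^ (n + 1 + l) = X * X ^ (n + l) := by ring
        rw [e2]; exact mul_dvd_mul h1 ih
      · have e3 : (X : PowerSeries ℂ) ^ (n + 1 + l) = X ^ (l + 1) * X ^ n := by ring
        rw [e3]; exact mul_dvd_mul h2 dvd_rfl

lemma key {k l : ℕ} {f g : PowerSeries ℂ} (hf : TangentId k f) (hg : TangentId l g)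
    {m : ℕ} (hm : m ≤ k + l) :
    coeff m (pcomp f g) = coeff m f + coeff m g - (if m = 1 then 1 else 0) := by
  have hgd : (X : PowerSeries ℂ) ∣ g := PowerSeries.X_dvd_iff.mpr hg.1
  have hgX : (X : PowerSeries ℂ) ^ (l + 1) ∣ g - X := by
    rw [PowerSeries.X_pow_dvd_iff]
    intro i hi
    rw [map_sub, PowerSeries.coeff_X]
    rcases Nat.lt_or_ge i 2 with hi2 | hi2
    · interval_cases i
      · simp [coeff_zero_eq_constantCoeff_apply, hg.1]
      · simp [hg.2.1]
    · rw [hg.2.2 i hi2 (by omega), if_neg (by omega : ¬ i = 1)]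
      simp
  have hpow : ∀ n, k + 1 ≤ n → coeff m (g ^ n) = if m = n then 1 else 0 := by
    intro n hn
    have hd := pow_sub_pow_dvd hgd hgX n
    have hz : coeff m (g ^ n - X ^ n) = 0 :=
      (PowerSeries.X_pow_dvd_iff.mp hd) m (by omega)
    rw [map_sub, sub_eq_zero] at hz
    rw [hz, PowerSeries.coeff_X_pow]
  rw [coeff_pcomp]
  rcases Nat.lt_or_ge m 2 with hm2 | hm2
  · interval_cases m
    · simp [coeff_zero_eq_constantCoeff_apply, hf.1, hg.1]
    · rw [Finset.sum_range_succ, Finset.sum_range_succ]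
      simp [PowerSeries.coeff_one, hf.2.1, hg.2.1, hf.1]
  · have termeq : ∀ n ∈ Finset.range (m + 1), coeff n f * coeff m (g ^ n)
        = (if n = 1 then coeff m g else 0) + (if n = m then coeff m f else 0) := by
      intro n hn
      have hnm : n ≤ m := Nat.lt_succ_iff.mp (Finset.mem_range.mp hn)
      rcases Nat.lt_or_ge n 2 with hn2 | hn2
      · interval_cases n
        · rw [if_neg (by omega : ¬ (0 : ℕ) = 1), if_neg (by omega : ¬ (0 : ℕ) = m),
            coeff_zero_eq_constantCoeff_apply, hf.1, zero_mul, add_zero]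
        · rw [if_pos rfl, if_neg (by omega : ¬ (1 : ℕ) = m), hf.2.1, one_mul, pow_one, add_zero]
      · rcases le_or_gt n k with hnk | hnk
        · rw [hf.2.2 n hn2 hnk, zero_mul, if_neg (by omega : ¬ n = 1), zero_add]
          by_cases hnm' : n = m
          · rw [if_pos hnm', ← hnm', hf.2.2 n hn2 hnk]
          · rw [if_neg hnm']
        · rw [hpow n (by omega)]
          rw [if_neg (by omega : ¬ n = 1), zero_add]
          by_cases hnm' : n = m
          · subst hnm'
            rw [if_pos rfl, if_pos rfl, mul_one]
          · rw [if_neg (by omega : ¬ m = n), if_neg hnm', mul_zero]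
    rw [Finset.sum_congr rfl termeq, Finset.sum_add_distrib,
      Finset.sum_ite_eq' (Finset.range (m + 1)) 1 fun _ => coeff m g,
      Finset.sum_ite_eq' (Finset.range (m + 1)) m fun _ => coeff m f]
    have h1 : 1 ∈ Finset.range (m + 1) := Finset.mem_range.mpr (by omega)
    have h2 : m ∈ Finset.range (m + 1) := Finset.mem_range.mpr (by omega)
    rw [if_pos h1, if_pos h2, if_neg (by omega : ¬ m = 1)]
    ring

end PcompAux

open PcompAux in
/-- If `f` is tangent to the identity at order `k ≥ 1` and `g` at order `l ≥ 1`, then the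
commutator `f ∘ g ∘ f⁻¹ ∘ g⁻¹` is tangent to the identity at order `k + l`. -/
theorem stmt4 (k l : ℕ) (hk : 1 ≤ k) (hl : 1 ≤ l) (f g finv ginv : PowerSeries ℂ)
    (hf : TangentId k f) (hg : TangentId l g)
    (hf0 : constantCoeff finv = 0) (hg0 : constantCoeff ginv = 0)
    (hf1 : pcomp f finv = X) (hf2 : pcomp finv f = X)
    (hg1 : pcomp g ginv = X) (hg2 : pcomp ginv g = X) :
    TangentId (k + l) (pcomp f (pcomp g (pcomp finv ginv))) := by
  have hfg0 : constantCoeff (pcomp finv ginv) = 0 := constantCoeff_pcomp ginv hf0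
  have e1 : pcomp f (pcomp g (pcomp finv ginv)) = pcomp (pcomp f g) (pcomp finv ginv) :=
    (pcomp_assoc hg.1 hfg0 f).symm
  have e2 : pcomp (pcomp g f) (pcomp finv ginv) = X := by
    rw [pcomp_assoc hf.1 hfg0 g, ← pcomp_assoc hf0 hg0 f, hf1, pcomp_X_left hg0, hg1]
  have hcoeff : ∀ m, m ≤ k + l →
      coeff m (pcomp f (pcomp g (pcomp finv ginv))) = coeff m (X : PowerSeries ℂ) := by
    intro m hm
    rw [e1, ← e2, coeff_pcomp, coeff_pcomp]
    apply Finset.sum_congr rfl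
    intro j hj
    have hj' : j ≤ k + l := le_trans (Nat.lt_succ_iff.mp (Finset.mem_range.mp hj)) hm
    rw [key hf hg hj', key hg hf (by omega)]
    ring
  refine ⟨?_, ?_, ?_⟩
  · rw [← coeff_zero_eq_constantCoeff_apply, hcoeff 0 (by omega)]
    simp
  · rw [hcoeff 1 (by omega)]
    simp
  · intro n h2 hn
    rw [hcoeff n hn, PowerSeries.coeff_X, if_neg (by omega)]
end

section
/- Let k ≥ 0 and let H ∈ ℂ[[x,y]] be a formal power series with H(0,y) = 0 whose partial derivative satisfies ∂H/∂x = 2x·y^{k+1}·u for some unit u ∈ ℂ[[x,y]]. Then H = x²·y^{k+1}·v for some unit v ∈ ℂ[[x,y]]. -/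
open PowerSeries

/-- We model `ℂ[[x,y]]` as `ℂ[[x]][[y]]`: the outer variable `X` is `y`, and
`x` is `PowerSeries.C (PowerSeries ℂ) PowerSeries.X`. -/
abbrev PS2 : Type := PowerSeries (PowerSeries ℂ)

/-- The variable `x` of `ℂ[[x,y]]`. -/
noncomputable def xVar : PS2 := (PowerSeries.C : PowerSeries ℂ →+* PS2) PowerSeries.X

/-- The partial derivative `∂/∂x` on `ℂ[[x,y]] = ℂ[[x]][[y]]` (coefficientwise in `y`). -/
noncomputable def dX (H : PS2) : PS2 :=
  PowerSeries.mk fun n => PowerSeries.derivativeFun ((PowerSeries.coeff n H : PowerSeries ℂ))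

/-- The partial derivative `∂/∂y` on `ℂ[[x,y]] = ℂ[[x]][[y]]`. -/
noncomputable def dY (H : PS2) : PS2 := PowerSeries.derivativeFun H

/-- The value at the origin `(0,0)` of an element of `ℂ[[x,y]]`. -/
noncomputable def evalOrigin (H : PS2) : ℂ :=
  (constantCoeff : PowerSeries ℂ →+* ℂ) ((constantCoeff : PS2 →+* PowerSeries ℂ) H)

lemma aux_zero (n k : ℕ) (hn : n < k + 1) (w : PS2) :
    coeff n (X ^ (k+1) * w) = 0 :=
  X_pow_dvd_iff.mp (dvd_mul_right _ _) n hn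

lemma aux_anti (f g : PowerSeries ℂ) (h1 : constantCoeff f = 0)
    (h2 : derivativeFun f = 2 * X * g) :
    f = X ^ 2 * PowerSeries.mk (fun m => (2 / ((m : ℂ) + 2)) * coeff m g) := by
  ext m
  match m with
  | 0 =>
    have : (coeff 0) f = 0 := by simpa using h1
    simp [this, coeff_X_pow_mul]
  | 1 =>
    have h := congrArg (coeff 0) h2
    rw [show ∀ n : ℕ, coeff n (derivativeFun f) = coeff (n + 1) f * (n + 1) from coeff_derivative f] at h
    rw [mul_assoc] at h
    simp at h
    have hr : coeff 1 ((X:PowerSeries ℂ) ^ 2 *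
        PowerSeries.mk (fun m => (2 / ((m : ℂ) + 2)) * coeff m g)) = 0 :=
      X_pow_dvd_iff.mp (dvd_mul_right _ _) 1 (by norm_num)
    rw [hr, h]
  | (m+2) =>
    have h := congrArg (coeff (m+1)) h2
    rw [show ∀ n : ℕ, coeff n (derivativeFun f) = coeff (n + 1) f * (n + 1) from coeff_derivative f, mul_assoc, mul_left_comm,
      show (2 : PowerSeries ℂ) * g = (2:ℂ) • g by rw [smul_eq_C_mul, map_ofNat],
      coeff_succ_X_mul, map_smul] at h
    have h2' : (coeff (m+2)) f * ((m:ℂ) + 2) = 2 * coeff m g := by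
      push_cast at h
      calc (coeff (m+2)) f * ((m:ℂ) + 2)
          = (coeff (m+1+1)) f * ((m:ℂ) + 1 + 1) := by ring_nf
        _ = 2 * coeff m g := h
    have hr : coeff (m+2) ((X:PowerSeries ℂ)^2 *
        PowerSeries.mk fun m => 2 / ((m:ℂ) + 2) * (coeff m) g)
        = 2 / ((m:ℂ)+2) * coeff m g := by
      simpa using coeff_X_pow_mul
        (PowerSeries.mk fun m => 2 / ((m:ℂ) + 2) * (coeff m) g) 2 m
    have hm : ((m:ℂ) + 2) ≠ 0 := by exact_mod_cast Nat.succ_ne_zero (m+1)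
    rw [hr]
    field_simp
    linear_combination h2'

/-- If `H ∈ ℂ[[x,y]]` satisfies `H(0,y) = 0` and `∂H/∂x = 2x·y^(k+1)·u` with `u` a unit, then
`H = x²·y^(k+1)·v` for some unit `v`. -/
theorem stmt12 (k : ℕ) (H u : PS2)
    (h0 : PowerSeries.map (constantCoeff : PowerSeries ℂ →+* ℂ) H = 0)
    (hu : evalOrigin u ≠ 0)
    (hd : dX H = 2 * xVar * X ^ (k + 1) * u) :
    ∃ v : PS2, evalOrigin v ≠ 0 ∧ H = xVar ^ 2 * X ^ (k + 1) * v := by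
  set v : PS2 := PowerSeries.mk fun j => PowerSeries.mk fun m =>
    (2 / ((m : ℂ) + 2)) * coeff m (coeff j u) with hv
  refine ⟨v, ?_, ?_⟩
  · have : evalOrigin v = evalOrigin u := by
      simp [evalOrigin, hv, ← coeff_zero_eq_constantCoeff]
    rw [this]; exact hu
  · ext n
    -- left side via the antiderivative lemma
    have h1 : constantCoeff (coeff n H) = 0 := by
      have : coeff n (PowerSeries.map constantCoeff H) = 0 := by
        rw [h0]; simp
      rw [coeff_map] at this
      exact this
    have h2 : derivativeFun (coeff n H)
        = 2 * X * coeff n (X ^ (k+1) * u) := by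
      have : coeff n (dX H)
          = coeff n (2 * xVar * X ^ (k + 1) * u) := by rw [hd]
      rw [dX, coeff_mk] at this
      rw [this]
      have hre : (2 : PS2) * xVar * X ^ (k + 1) * u
          = PowerSeries.C (2 * X) * (X ^ (k+1) * u) := by
        rw [map_mul, map_ofNat]; unfold xVar; ring
      rw [hre, coeff_C_mul]
    have key := aux_anti _ _ h1 h2
    -- right side
    have hrhs : coeff n (xVar ^ 2 * X ^ (k+1) * v)
        = X ^ 2 * coeff n (X ^ (k+1) * v) := by
      have : xVar ^ 2 * X ^ (k+1) * v
          = PowerSeries.C (X ^ 2) * (X ^ (k+1) * v) := by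
        unfold xVar; rw [map_pow]; ring
      rw [this, coeff_C_mul]
    have hcoeff : (PowerSeries.mk fun m => (2 / ((m : ℂ) + 2)) *
          coeff m (coeff n (X ^ (k+1) * u)))
        = coeff n (X ^ (k+1) * v) := by
      rcases le_or_gt (k+1) n with hle | hlt
      · obtain ⟨d, rfl⟩ : ∃ d, n = d + (k+1) := ⟨n - (k+1), by omega⟩
        rw [coeff_X_pow_mul, coeff_X_pow_mul, hv, coeff_mk]
      · rw [aux_zero n k hlt, aux_zero n k hlt]
        ext m
        simp
    rw [hrhs, key, hcoeff]
end
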